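/- arXiv:1510.03465 — 4 statements merged into one kernel-verified Lean document; each statement's English description precedes it below -/
import Mathlib

section
/- (Wintner's theorem) Let f, g : ℕ → ℂ be arithmetic functions related by f(n) = ∑_{d | n} g(d) for every n ≥ 1. If the series ∑_{n ≥ 1} g(n)/n converges absolutely, with sum c, then ∑_{n ≤ x} f(n) = c·x + o(x) as x → ∞; in particular the mean value M(f) exists and equals c = ∑_{n ≥ 1} g(n)/n. -/
open Filter Finset

lemma swap_div (g : ℕ → ℂ) (N : ℕ) :
    ∑ n ∈ Icc 1 N, ∑ d ∈ n.divisors, g d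
      = ∑ d ∈ Icc 1 N, ((N / d : ℕ) : ℂ) * g d := by
  have hrhs : ∀ d ∈ Icc 1 N, ((N / d : ℕ) : ℂ) * g d = ∑ _q ∈ Icc 1 (N / d), g d := by
    intro d _
    rw [Finset.sum_const, Nat.card_Icc]
    simp [nsmul_eq_mul]
  rw [Finset.sum_congr rfl hrhs, Finset.sum_sigma', Finset.sum_sigma']
  refine Finset.sum_nbij' (fun p => ⟨p.2, p.1 / p.2⟩) (fun p => ⟨p.1 * p.2, p.1⟩) ?_ ?_ ?_ ?_ ?_
  · rintro ⟨n, d⟩ hp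
    simp only [Finset.mem_sigma, Finset.mem_Icc, Nat.mem_divisors] at hp ⊢
    obtain ⟨⟨h1, h2⟩, hd, hn0⟩ := hp
    have hd0 : 0 < d := Nat.pos_of_dvd_of_pos hd h1
    refine ⟨⟨hd0, le_trans (Nat.le_of_dvd h1 hd) h2⟩, ?_, Nat.div_le_div_right h2⟩
    exact Nat.one_le_div_iff hd0 |>.2 (Nat.le_of_dvd h1 hd)
  · rintro ⟨d, q⟩ hp
    simp only [Finset.mem_sigma, Finset.mem_Icc, Nat.mem_divisors] at hp ⊢
    obtain ⟨⟨hd1, hdN⟩, hq1, hqN⟩ := hp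
    have hd0 : 0 < d := hd1
    refine ⟨⟨Nat.one_le_iff_ne_zero.2 (by positivity), ?_⟩, ⟨q, rfl⟩, by positivity⟩
    calc d * q ≤ d * (N / d) := Nat.mul_le_mul_left d hqN
    _ ≤ N := Nat.mul_div_le N d
  · rintro ⟨n, d⟩ hp
    simp only [Finset.mem_sigma, Finset.mem_Icc, Nat.mem_divisors] at hp
    obtain ⟨_, hd, _⟩ := hp
    simp [Nat.mul_div_cancel' hd]
  · rintro ⟨d, q⟩ hp
    simp only [Finset.mem_sigma, Finset.mem_Icc] at hp
    have : 0 < d := hp.1.1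
    simp [Nat.mul_div_cancel_left q this]
  · rintro ⟨n, d⟩ _; rfl

lemma real_lim (d : ℕ) (hd : 1 ≤ d) :
    Tendsto (fun x : ℝ => ((⌊x⌋₊ / d : ℕ) : ℝ) / x) atTop (nhds (1 / d)) := by
  have hd0 : (0 : ℝ) < d := by exact_mod_cast hd
  have hlow : Tendsto (fun x : ℝ => 1 / (d : ℝ) - 1 / x) atTop (nhds (1 / d)) := by
    have := tendsto_const_nhds (x := (1 / (d : ℝ))) (f := atTop (α := ℝ)) |>.sub
      tendsto_inv_atTop_zero
    simpa [one_div] using this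
  refine tendsto_of_tendsto_of_tendsto_of_le_of_le' hlow tendsto_const_nhds ?_ ?_
  · filter_upwards [eventually_ge_atTop (1 : ℝ)] with x hx
    have hx0 : (0 : ℝ) < x := lt_of_lt_of_le one_pos hx
    have h1 : x / d - 1 < ((⌊x⌋₊ / d : ℕ) : ℝ) := by
      rw [← Nat.floor_div_natCast x d]
      exact Nat.sub_one_lt_floor (x / d)
    have h2 : (x / d - 1) / x ≤ ((⌊x⌋₊ / d : ℕ) : ℝ) / x :=
      div_le_div_of_nonneg_right h1.le hx0.le
    have h3 : (x / d - 1) / x = 1 / d - 1 / x := by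
      field_simp
    linarith [h2, h3.symm.le]
  · filter_upwards [eventually_ge_atTop (1 : ℝ)] with x hx
    have hx0 : (0 : ℝ) < x := lt_of_lt_of_le one_pos hx
    have hm : ((⌊x⌋₊ / d : ℕ) : ℝ) * d ≤ x := by
      have h1 : ((⌊x⌋₊ / d * d : ℕ) : ℝ) ≤ (⌊x⌋₊ : ℝ) := by
        exact_mod_cast Nat.div_mul_le_self ⌊x⌋₊ d
      have h2 : (⌊x⌋₊ : ℝ) ≤ x := Nat.floor_le hx0.le
      push_cast at h1
      linarith
    rw [div_le_div_iff₀ hx0 hd0]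
    nlinarith

/-- **Wintner's theorem** (Theorem 7(i)): if f(n) = ∑_{d ∣ n} g(d) and
∑_{n ≥ 1} g(n)/n converges absolutely with sum c, then
∑_{n ≤ x} f(n) = c·x + o(x); in particular M(f) = c. -/
theorem wintner (f g : ℕ → ℂ)
    (hf : ∀ n : ℕ, 1 ≤ n → f n = ∑ d ∈ n.divisors, g d)
    (hg : Summable (fun n : ℕ => ‖g n / n‖)) :
    Tendsto (fun x : ℝ => (∑ n ∈ Finset.Icc 1 ⌊x⌋₊, f n) / x) atTop
      (nhds (∑' n : ℕ, g n / n)) := by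
  set F : ℝ → ℕ → ℂ := fun x d => ((⌊x⌋₊ / d : ℕ) : ℂ) / (x : ℂ) * g d with hF
  have hFr : ∀ (x : ℝ) (d : ℕ),
      F x d = ((((⌊x⌋₊ / d : ℕ) : ℝ) / x : ℝ) : ℂ) * g d := by
    intro x d
    simp [hF]
  have key : ∀ x : ℝ, (∑' d, F x d) = (∑ n ∈ Finset.Icc 1 ⌊x⌋₊, f n) / x := by
    intro x
    have hsupp : ∀ d ∉ Finset.Icc 1 ⌊x⌋₊, F x d = 0 := by
      intro d hd
      simp only [Finset.mem_Icc, not_and_or, not_le] at hd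
      rcases hd with hd | hd
      · have : d = 0 := Nat.lt_one_iff.mp hd
        simp [hF, this]
      · simp [hF, Nat.div_eq_of_lt hd]
    rw [tsum_eq_sum hsupp,
      Finset.sum_congr rfl (fun n hn => hf n (Finset.mem_Icc.mp hn).1), swap_div,
      Finset.sum_div]
    refine Finset.sum_congr rfl fun d _ => ?_
    simp only [hF]
    ring
  have hab : ∀ d : ℕ, Tendsto (fun x : ℝ => F x d) atTop (nhds (g d / d)) := by
    intro d
    rcases Nat.eq_zero_or_pos d with rfl | hd
    · simp only [hF, Nat.div_zero, Nat.cast_zero, zero_div, zero_mul, Nat.cast_zero, div_zero]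
      simpa using tendsto_const_nhds
    · have h1 : Tendsto (fun x : ℝ => ((((⌊x⌋₊ / d : ℕ) : ℝ) / x : ℝ) : ℂ))
          atTop (nhds ((1 / d : ℝ) : ℂ)) :=
        (Complex.continuous_ofReal.tendsto _).comp (real_lim d hd)
      have h2 := h1.mul (tendsto_const_nhds (x := g d))
      have h3 : ((1 / d : ℝ) : ℂ) * g d = g d / d := by
        push_cast
        ring
      rw [h3] at h2
      exact h2.congr fun x => (hFr x d).symm
  have h_bound : ∀ᶠ x : ℝ in atTop, ∀ d, ‖F x d‖ ≤ ‖g d / d‖ := by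
    filter_upwards [eventually_ge_atTop (1 : ℝ)] with x hx
    intro d
    have hx0 : (0 : ℝ) < x := lt_of_lt_of_le one_pos hx
    rcases Nat.eq_zero_or_pos d with rfl | hd
    · simp [hF]
    · have hd0 : (0 : ℝ) < d := by exact_mod_cast hd
      have hm : ((⌊x⌋₊ / d : ℕ) : ℝ) * d ≤ x := by
        have h1 : ((⌊x⌋₊ / d * d : ℕ) : ℝ) ≤ (⌊x⌋₊ : ℝ) := by
          exact_mod_cast Nat.div_mul_le_self ⌊x⌋₊ d
        have h2 : (⌊x⌋₊ : ℝ) ≤ x := Nat.floor_le hx0.le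
        push_cast at h1
        linarith
      have hdiv : ((⌊x⌋₊ / d : ℕ) : ℝ) / x ≤ 1 / d := by
        rw [div_le_div_iff₀ hx0 hd0]
        nlinarith
      rw [hFr x d, norm_mul, norm_div, Complex.norm_real, Complex.norm_natCast]
      rw [Real.norm_eq_abs, abs_of_nonneg (by positivity)]
      calc ((⌊x⌋₊ / d : ℕ) : ℝ) / x * ‖g d‖ ≤ 1 / d * ‖g d‖ :=
            mul_le_mul_of_nonneg_right hdiv (norm_nonneg _)
        _ = ‖g d‖ / d := by ring
  have := tendsto_tsum_of_dominated_convergence hg hab h_bound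
  exact this.congr key
end

section
/- Let f, g : ℕ → ℂ be arithmetic functions related by f(n) = ∑_{d | n} g(d) for every n ≥ 1. If ∑_{n ≥ 1} |g(n)|/n converges and moreover ∑_{n ≥ 1} |g(n)| n^{−σ} converges for every real σ > 1/2, then for every ε > 0 one has ∑_{n ≤ x} f(n) = c·x + O(x^{1/2+ε}) as x → ∞, where c = ∑_{n ≥ 1} g(n)/n. -/
open Filter Finset Asymptotics

/-- Divisor-sum rearrangement: summing `∑_{d ∣ n} g d` over `1 ≤ n ≤ N` counts each
`g d` exactly `⌊N/d⌋` times. -/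
lemma wintner_sum_divisors_eq (g : ℕ → ℂ) (N : ℕ) :
    ∑ n ∈ Finset.Icc 1 N, ∑ d ∈ n.divisors, g d
      = ∑ d ∈ Finset.Icc 1 N, ((N / d : ℕ) : ℂ) * g d := by
  have h1 : ∀ n ∈ Finset.Icc 1 N, ∑ d ∈ n.divisors, g d
      = ∑ d ∈ Finset.Icc 1 N, if d ∣ n then g d else 0 := by
    intro n hn
    rw [Finset.mem_Icc] at hn
    rw [← Finset.sum_filter]
    apply Finset.sum_congr _ fun _ _ => rfl
    ext d
    simp only [Nat.mem_divisors, Finset.mem_filter, Finset.mem_Icc]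
    constructor
    · rintro ⟨hd, hn0⟩
      have hd0 : d ≠ 0 := by rintro rfl; exact hn0 (Nat.eq_zero_of_zero_dvd hd)
      exact ⟨⟨Nat.one_le_iff_ne_zero.2 hd0,
        le_trans (Nat.le_of_dvd (Nat.pos_of_ne_zero hn0) hd) hn.2⟩, hd⟩
    · rintro ⟨⟨h1d, hdN⟩, hd⟩
      exact ⟨hd, by omega⟩
  rw [Finset.sum_congr rfl h1, Finset.sum_comm]
  refine Finset.sum_congr rfl fun d hd => ?_
  rw [← Finset.sum_filter, Finset.sum_const]
  have hIcc : Finset.Icc 1 N = Finset.Ioc 0 N := rfl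
  rw [hIcc, Nat.Ioc_filter_dvd_card_eq_div, nsmul_eq_mul]

/-- Main estimate: the rearranged sum minus `c x` is `O(x^σ)` for `1/2 < σ ≤ 1`. -/
lemma wintner_main (g : ℕ → ℂ)
    (hg : Summable (fun n : ℕ => ‖g n‖ / n))
    (σ : ℝ) (hσ0 : 0 < σ) (hσ1 : σ ≤ 1)
    (hs : Summable (fun n : ℕ => ‖g n‖ / (n : ℝ) ^ σ)) :
    (fun x : ℝ => (∑ d ∈ Finset.Icc 1 ⌊x⌋₊, ((⌊x⌋₊ / d : ℕ) : ℂ) * g d)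
        - (∑' n : ℕ, g n / n) * x)
      =O[atTop] (fun x : ℝ => x ^ σ) := by
  have hc : Summable (fun n : ℕ => g n / (n : ℂ)) := by
    apply Summable.of_norm
    have : (fun n : ℕ => ‖g n / (n : ℂ)‖) = fun n : ℕ => ‖g n‖ / n := by
      ext n
      rw [norm_div, Complex.norm_natCast]
    rw [this]; exact hg
  set C : ℝ := ∑' n : ℕ, ‖g n‖ / (n : ℝ) ^ σ with hC
  rw [isBigO_iff]
  refine ⟨2 * C, ?_⟩
  filter_upwards [eventually_ge_atTop (1 : ℝ)] with x hx1
  have hx0 : (0 : ℝ) ≤ x := by linarith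
  set N := ⌊x⌋₊ with hNdef
  have hN1 : 1 ≤ N := Nat.le_floor (by exact_mod_cast hx1)
  have hNx : (N : ℝ) ≤ x := Nat.floor_le hx0
  have hxN : x < (N : ℝ) + 1 := Nat.lt_floor_add_one x
  clear_value N
  -- split the tsum
  have hsplit := Summable.sum_add_tsum_nat_add (N + 1) hc
  set T : ℂ := ∑' k : ℕ, g (k + (N + 1)) / ((k + (N + 1) : ℕ) : ℂ) with hT
  have hrange : Finset.range (N + 1) = insert 0 (Finset.Icc 1 N) := by
    ext m; simp only [Finset.mem_range, Finset.mem_insert, Finset.mem_Icc]; omega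
  have hpart : ∑ i ∈ Finset.range (N + 1), g i / (i : ℂ)
      = ∑ d ∈ Finset.Icc 1 N, g d / (d : ℂ) := by
    rw [hrange, Finset.sum_insert (by simp)]
    simp
  have hkey : (∑ d ∈ Finset.Icc 1 N, ((N / d : ℕ) : ℂ) * g d)
      - (∑' n : ℕ, g n / n) * x
      = (∑ d ∈ Finset.Icc 1 N, (((N / d : ℕ) : ℂ) - (x : ℂ) / d) * g d) - T * x := by
    rw [← hsplit, hpart]
    have hsum : (∑ d ∈ Finset.Icc 1 N, (((N / d : ℕ) : ℂ) - (x : ℂ) / d) * g d)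
        = (∑ d ∈ Finset.Icc 1 N, ((N / d : ℕ) : ℂ) * g d)
          - ∑ d ∈ Finset.Icc 1 N, g d / (d : ℂ) * (x : ℂ) := by
      rw [← Finset.sum_sub_distrib]
      exact Finset.sum_congr rfl fun d _ => by ring
    rw [hsum, add_mul, Finset.sum_mul]
    ring
  rw [hkey]
  -- bound the two pieces
  have hbound1 : ‖∑ d ∈ Finset.Icc 1 N, (((N / d : ℕ) : ℂ) - (x : ℂ) / d) * g d‖
      ≤ x ^ σ * C := by
    refine le_trans (norm_sum_le _ _) ?_
    have hterm : ∀ d ∈ Finset.Icc 1 N,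
        ‖(((N / d : ℕ) : ℂ) - (x : ℂ) / d) * g d‖ ≤ x ^ σ * (‖g d‖ / (d : ℝ) ^ σ) := by
      intro d hd
      rw [Finset.mem_Icc] at hd
      have hd0 : (0 : ℝ) < d := by exact_mod_cast hd.1
      have hfloor : (N / d : ℕ) = ⌊x / d⌋₊ := by
        rw [hNdef]; exact (Nat.floor_div_natCast x d).symm
      have hcast : (((N / d : ℕ) : ℂ) - (x : ℂ) / d)
          = (((N / d : ℕ) : ℝ) - x / d : ℝ) := by push_cast; ring
      rw [norm_mul, hcast, Complex.norm_real, Real.norm_eq_abs]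
      have habs : |((N / d : ℕ) : ℝ) - x / d| ≤ 1 := by
        rw [hfloor, abs_le]
        have h1 : (⌊x / d⌋₊ : ℝ) ≤ x / d := Nat.floor_le (by positivity)
        have h2 : x / d < (⌊x / d⌋₊ : ℝ) + 1 := Nat.lt_floor_add_one _
        constructor <;> linarith
      have hdx : (d : ℝ) ≤ x := le_trans (by exact_mod_cast hd.2) hNx
      have hpow : (d : ℝ) ^ σ ≤ x ^ σ := Real.rpow_le_rpow (le_of_lt hd0) hdx (le_of_lt hσ0)
      have hdσ : (0 : ℝ) < (d : ℝ) ^ σ := Real.rpow_pos_of_pos hd0 σ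
      calc |((N / d : ℕ) : ℝ) - x / d| * ‖g d‖ ≤ 1 * ‖g d‖ := by
              exact mul_le_mul_of_nonneg_right habs (norm_nonneg _)
        _ = ‖g d‖ := one_mul _
        _ ≤ (x ^ σ / (d : ℝ) ^ σ) * ‖g d‖ := by
              refine le_mul_of_one_le_left (norm_nonneg _) ?_
              rw [le_div_iff₀ hdσ, one_mul]; exact hpow
        _ = x ^ σ * (‖g d‖ / (d : ℝ) ^ σ) := by ring
    refine le_trans (Finset.sum_le_sum hterm) ?_
    rw [← Finset.mul_sum]
    refine mul_le_mul_of_nonneg_left ?_ (Real.rpow_nonneg hx0 σ)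
    exact Summable.sum_le_tsum _ (fun i _ => by positivity) hs
  have htail_sum : Summable (fun k : ℕ => ‖g (k + (N + 1))‖ / ((k + (N + 1) : ℕ) : ℝ)) := by
    exact (summable_nat_add_iff (f := fun n : ℕ => ‖g n‖ / (n : ℝ)) (N + 1)).2 hg
  have htail_sum' : Summable (fun k : ℕ => ‖g (k + (N + 1))‖ / ((k + (N + 1) : ℕ) : ℝ) ^ σ) := by
    exact (summable_nat_add_iff (f := fun n : ℕ => ‖g n‖ / (n : ℝ) ^ σ) (N + 1)).2 hs
  have hbound2 : ‖T * x‖ ≤ x ^ σ * C := by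
    rw [norm_mul, Complex.norm_real, Real.norm_eq_abs, abs_of_nonneg hx0, mul_comm]
    have hTle : ‖T‖ ≤ ∑' k : ℕ, ‖g (k + (N + 1))‖ / ((k + (N + 1) : ℕ) : ℝ) := by
      refine le_trans (norm_tsum_le_tsum_norm ?_) ?_
      · have : (fun k : ℕ => ‖g (k + (N + 1)) / ((k + (N + 1) : ℕ) : ℂ)‖)
            = fun k : ℕ => ‖g (k + (N + 1))‖ / ((k + (N + 1) : ℕ) : ℝ) := by
          ext k
          rw [norm_div, Complex.norm_natCast]
        rw [this]; exact htail_sum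
      · refine le_of_eq (tsum_congr fun k => ?_)
        rw [norm_div, Complex.norm_natCast]
    have hxT : x * ‖T‖ ≤ x * ∑' k : ℕ, ‖g (k + (N + 1))‖ / ((k + (N + 1) : ℕ) : ℝ) :=
      mul_le_mul_of_nonneg_left hTle hx0
    refine le_trans hxT ?_
    rw [← tsum_mul_left]
    have hterm2 : ∀ k : ℕ, x * (‖g (k + (N + 1))‖ / ((k + (N + 1) : ℕ) : ℝ))
        ≤ x ^ σ * (‖g (k + (N + 1))‖ / ((k + (N + 1) : ℕ) : ℝ) ^ σ) := by
      intro k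
      set m : ℕ := k + (N + 1) with hm
      have hm0 : (0 : ℝ) < m := by positivity
      have hxm : x ≤ (m : ℝ) := by
        have : (N : ℝ) + 1 ≤ (m : ℝ) := by exact_mod_cast Nat.le_add_left (N + 1) k
        linarith
      have ht0 : (0 : ℝ) < x / m := by positivity
      have ht1 : x / m ≤ 1 := (div_le_one hm0).2 hxm
      have := Real.rpow_le_rpow_of_exponent_ge ht0 ht1 hσ1
      rw [Real.rpow_one] at this
      have hdr : (x / (m : ℝ)) ^ σ = x ^ σ / (m : ℝ) ^ σ := Real.div_rpow hx0 (le_of_lt hm0) σ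
      rw [hdr] at this
      calc x * (‖g m‖ / (m : ℝ)) = (x / m) * ‖g m‖ := by ring
        _ ≤ (x ^ σ / (m : ℝ) ^ σ) * ‖g m‖ := mul_le_mul_of_nonneg_right this (norm_nonneg _)
        _ = x ^ σ * (‖g m‖ / (m : ℝ) ^ σ) := by ring
    refine le_trans (Summable.tsum_le_tsum hterm2 (htail_sum.mul_left x) (htail_sum'.mul_left (x ^ σ))) ?_
    rw [tsum_mul_left]
    refine mul_le_mul_of_nonneg_left ?_ (Real.rpow_nonneg hx0 σ)
    have h := Summable.sum_add_tsum_nat_add (N + 1) hs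
    have hpos : 0 ≤ ∑ i ∈ Finset.range (N + 1), ‖g i‖ / (i : ℝ) ^ σ :=
      Finset.sum_nonneg fun i _ => by positivity
    linarith [h]
  have hnorm : ‖x ^ σ‖ = x ^ σ := by
    rw [Real.norm_eq_abs, abs_of_nonneg (Real.rpow_nonneg hx0 σ)]
  calc ‖(∑ d ∈ Finset.Icc 1 N, (((N / d : ℕ) : ℂ) - (x : ℂ) / d) * g d) - T * x‖
      ≤ ‖∑ d ∈ Finset.Icc 1 N, (((N / d : ℕ) : ℂ) - (x : ℂ) / d) * g d‖ + ‖T * x‖ :=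
        norm_sub_le _ _
    _ ≤ x ^ σ * C + x ^ σ * C := add_le_add hbound1 hbound2
    _ = 2 * C * ‖x ^ σ‖ := by rw [hnorm]; ring

/-- Theorem 7(ii): if f(n) = ∑_{d ∣ n} g(d), the series ∑ |g(n)|/n converges,
and ∑ |g(n)| n^{−σ} converges for every σ > 1/2, then for every ε > 0,
∑_{n ≤ x} f(n) = c·x + O(x^{1/2+ε}) with c = ∑_{n ≥ 1} g(n)/n. -/
theorem wintner_half_plane (f g : ℕ → ℂ)
    (hf : ∀ n : ℕ, 1 ≤ n → f n = ∑ d ∈ n.divisors, g d)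
    (hg : Summable (fun n : ℕ => ‖g n‖ / n))
    (hg' : ∀ σ : ℝ, 1 / 2 < σ → Summable (fun n : ℕ => ‖g n‖ / (n : ℝ) ^ σ)) :
    ∀ ε : ℝ, 0 < ε →
      (fun x : ℝ => (∑ n ∈ Finset.Icc 1 ⌊x⌋₊, f n) - (∑' n : ℕ, g n / n) * x)
        =O[atTop] (fun x : ℝ => x ^ (1 / 2 + ε)) := by
  intro ε hε
  set σ : ℝ := 1 / 2 + min ε (1 / 2) with hσdef
  have hσ0 : 0 < σ := by
    have : 0 < min ε (1 / 2) := lt_min hε (by norm_num)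
    simp only [hσdef]; linarith
  have hσhalf : 1 / 2 < σ := by
    have : 0 < min ε (1 / 2) := lt_min hε (by norm_num)
    simp only [hσdef]; linarith
  have hσ1 : σ ≤ 1 := by
    have : min ε (1 / 2) ≤ 1 / 2 := min_le_right _ _
    simp only [hσdef]; linarith
  have hmain := wintner_main g hg σ hσ0 hσ1 (hg' σ hσhalf)
  have heq : (fun x : ℝ => (∑ n ∈ Finset.Icc 1 ⌊x⌋₊, f n) - (∑' n : ℕ, g n / n) * x)
      =ᶠ[atTop] (fun x : ℝ => (∑ d ∈ Finset.Icc 1 ⌊x⌋₊, ((⌊x⌋₊ / d : ℕ) : ℂ) * g d)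
        - (∑' n : ℕ, g n / n) * x) := by
    filter_upwards [eventually_ge_atTop (1 : ℝ)] with x _
    congr 1
    rw [← wintner_sum_divisors_eq]
    refine Finset.sum_congr rfl fun n hn => ?_
    rw [Finset.mem_Icc] at hn
    exact hf n hn.1
  have hpow : (fun x : ℝ => x ^ σ) =O[atTop] (fun x : ℝ => x ^ (1 / 2 + ε)) := by
    rw [isBigO_iff]
    refine ⟨1, ?_⟩
    filter_upwards [eventually_ge_atTop (1 : ℝ)] with x hx1
    have hσε : σ ≤ 1 / 2 + ε := by
      have : min ε (1 / 2) ≤ ε := min_le_left _ _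
      simp only [hσdef]; linarith
    rw [one_mul, Real.norm_eq_abs, Real.norm_eq_abs,
      abs_of_nonneg (Real.rpow_nonneg (by linarith) _),
      abs_of_nonneg (Real.rpow_nonneg (by linarith) _)]
    exact Real.rpow_le_rpow_of_exponent_le hx1 hσε
  exact (heq.trans_isBigO hmain).trans hpow
end

section
/- (Axer's theorem) Let f, g : ℕ → ℂ be arithmetic functions with f(n) = ∑_{d | n} g(d) for every n ≥ 1. If the series ∑_{n ≥ 1} g(n)/n converges with sum c and ∑_{n ≤ x} |g(n)| = O(x) as x → ∞, then ∑_{n ≤ x} f(n) = c·x + o(x) as x → ∞; in particular M(f) = ∑_{n ≥ 1} g(n)/n. -/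
open Filter Finset Asymptotics


/-- Abel-type identity: partial sums of `g` in terms of partial sums of `g n / n`. -/
lemma axer_abel (g : ℕ → ℂ) (N : ℕ) :
    ∑ n ∈ Finset.Icc 1 N, g n
      = (N : ℂ) * (∑ n ∈ Finset.Icc 1 N, g n / n)
        - ∑ k ∈ Finset.range N, ∑ n ∈ Finset.Icc 1 k, g n / n := by
  induction N with
  | zero => simp
  | succ N ih =>
    rw [Finset.sum_Icc_succ_top (by omega), ih, Finset.sum_range_succ,
        Finset.sum_Icc_succ_top (by omega : 1 ≤ N + 1)]
    have hN : ((N + 1 : ℕ) : ℂ) ≠ 0 := Nat.cast_ne_zero.mpr (by omega)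
    push_cast at hN
    push_cast
    field_simp
    ring

/-- Kronecker's lemma. -/
lemma axer_kronecker (g : ℕ → ℂ) (c : ℂ)
    (hc : Tendsto (fun N : ℕ => ∑ n ∈ Finset.Icc 1 N, g n / n) atTop (nhds c)) :
    Tendsto (fun N : ℕ => (∑ n ∈ Finset.Icc 1 N, g n) / N) atTop (nhds 0) := by
  set G : ℕ → ℂ := fun N => ∑ n ∈ Finset.Icc 1 N, g n / n with hG
  have hces : Tendsto (fun N : ℕ => (N⁻¹ : ℝ) • ∑ k ∈ Finset.range N, G k) atTop (nhds c) :=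
    hc.cesaro_smul
  have h0 : Tendsto (fun N : ℕ => G N - (N⁻¹ : ℝ) • ∑ k ∈ Finset.range N, G k)
      atTop (nhds (c - c)) := hc.sub hces
  rw [sub_self] at h0
  refine Filter.Tendsto.congr' ?_ h0
  filter_upwards [Filter.eventually_ge_atTop 1] with N hN
  have hN0 : (N : ℂ) ≠ 0 := Nat.cast_ne_zero.mpr (by omega)
  rw [axer_abel g N]
  rw [Complex.real_smul]
  push_cast
  field_simp
  ring

/-- Interchanging the order of summation: ∑_{n≤N} ∑_{d∣n} g d = ∑_{d≤N} ⌊N/d⌋ g d. -/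
lemma axer_swap (f g : ℕ → ℂ)
    (hf : ∀ n : ℕ, 1 ≤ n → f n = ∑ d ∈ n.divisors, g d) (N : ℕ) :
    ∑ n ∈ Finset.Icc 1 N, f n = ∑ d ∈ Finset.Icc 1 N, ((N / d : ℕ) : ℂ) * g d := by
  have h1 : ∀ n ∈ Finset.Icc 1 N, f n = ∑ d ∈ Finset.Icc 1 N, if d ∣ n then g d else 0 := by
    intro n hn
    rw [Finset.mem_Icc] at hn
    rw [hf n hn.1, ← Finset.sum_filter]
    congr 1
    ext d
    simp only [Finset.mem_filter, Finset.mem_Icc, Nat.mem_divisors]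
    constructor
    · rintro ⟨hdvd, hne⟩
      have hnpos : 0 < n := hn.1
      exact ⟨⟨Nat.pos_of_dvd_of_pos hdvd hnpos, le_trans (Nat.le_of_dvd hnpos hdvd) hn.2⟩, hdvd⟩
    · rintro ⟨⟨hd1, hd2⟩, hdvd⟩
      exact ⟨hdvd, by omega⟩
  rw [Finset.sum_congr rfl h1, Finset.sum_comm]
  refine Finset.sum_congr rfl fun d hd => ?_
  rw [← Finset.sum_filter, Finset.sum_const]
  have h2 : (Finset.Icc 1 N).filter (fun n => d ∣ n)
      = (Finset.Ioc 0 N).filter (fun n => d ∣ n) := by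
    rw [← (show Finset.Icc 1 _ = Finset.Ioc 0 _ from Finset.Icc_add_one_left_eq_Ioc 0 _)]
  rw [h2, Nat.Ioc_filter_dvd_card_eq_div, nsmul_eq_mul]

/-- Telescoping decomposition of a sum over `Ioc (N/(K+1)) N`. -/
lemma axer_telescope (h : ℕ → ℂ) (N K : ℕ) :
    ∑ d ∈ Finset.Ioc (N / (K + 1)) N, h d
      = ∑ k ∈ Finset.Icc 1 K, ∑ d ∈ Finset.Ioc (N / (k + 1)) (N / k), h d := by
  induction K with
  | zero => simp [Nat.div_one]
  | succ K ih =>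
    rw [Finset.sum_Icc_succ_top (by omega : 1 ≤ K + 1), ← ih,
      ← Finset.sum_Ioc_consecutive h
        (Nat.div_le_div_left (by omega) (by omega) : N / (K + 1 + 1) ≤ N / (K + 1))
        (Nat.div_le_self N (K + 1))]
    exact add_comm _ _

lemma axer_div_eq (N k d : ℕ) (hk : 1 ≤ k) (hd : d ∈ Finset.Ioc (N / (k + 1)) (N / k)) :
    N / d = k := by
  rw [Finset.mem_Ioc] at hd
  obtain ⟨h1, h2⟩ := hd
  have hd0 : 0 < d := lt_of_le_of_lt (Nat.zero_le _) h1
  have hk1 : k ≤ N / d := by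
    rw [Nat.le_div_iff_mul_le hd0, mul_comm]
    exact (Nat.le_div_iff_mul_le (by omega)).mp h2
  have hk2 : N / d < k + 1 := by
    rw [Nat.div_lt_iff_lt_mul hd0, mul_comm]
    exact (Nat.div_lt_iff_lt_mul (by omega)).mp h1
  omega

/-- `S (N / k) / N → 0` if `S N / N → 0`. -/
lemma axer_Sdiv (S : ℕ → ℂ) (hS : Tendsto (fun N : ℕ => S N / N) atTop (nhds 0))
    (k : ℕ) (hk : 1 ≤ k) :
    Tendsto (fun N : ℕ => S (N / k) / N) atTop (nhds 0) := by
  have hcomp : Tendsto (fun N : ℕ => N / k) atTop atTop :=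
    Nat.tendsto_div_const_atTop (by omega)
  have h1 : Tendsto (fun N : ℕ => ‖S (N / k) / ((N / k : ℕ) : ℂ)‖) atTop (nhds 0) := by
    have := (hS.comp hcomp).norm
    simpa using this
  apply squeeze_zero_norm' _ h1
  filter_upwards [Filter.eventually_ge_atTop k] with N hN
  have h2 : 1 ≤ N / k := (Nat.one_le_div_iff (by omega)).mpr hN
  rw [norm_div, norm_div, Complex.norm_natCast, Complex.norm_natCast]
  have h3 : (0:ℝ) < ((N / k : ℕ) : ℝ) := by exact_mod_cast Nat.lt_of_lt_of_le Nat.zero_lt_one h2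
  gcongr
  exact_mod_cast Nat.div_le_self N k

/-- From the big-O hypothesis, a uniform linear bound for all naturals. -/
lemma axer_bound (g : ℕ → ℂ)
    (hg : (fun x : ℝ => ∑ n ∈ Finset.Icc 1 ⌊x⌋₊, ‖g n‖) =O[atTop] (fun x : ℝ => x)) :
    ∃ C : ℝ, 0 < C ∧ ∀ M : ℕ, (∑ n ∈ Finset.Icc 1 M, ‖g n‖) ≤ C * M := by
  obtain ⟨C, hC⟩ := hg.bound
  rw [Filter.eventually_atTop] at hC
  obtain ⟨x₀, hx₀⟩ := hC
  set N₀ : ℕ := ⌈max x₀ 0⌉₊ with hN₀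
  have key : ∀ M : ℕ, N₀ ≤ M → (∑ n ∈ Finset.Icc 1 M, ‖g n‖) ≤ C * M := by
    intro M hM
    have hMx : x₀ ≤ (M : ℝ) := by
      calc x₀ ≤ max x₀ 0 := le_max_left _ _
        _ ≤ (N₀ : ℝ) := Nat.le_ceil _
        _ ≤ M := by exact_mod_cast hM
    have := hx₀ (M : ℝ) hMx
    rw [Nat.floor_natCast] at this
    have hrw : ‖∑ n ∈ Finset.Icc 1 M, ‖g n‖‖ = ∑ n ∈ Finset.Icc 1 M, ‖g n‖ :=
      Real.norm_of_nonneg (Finset.sum_nonneg fun _ _ => norm_nonneg _)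
    rw [hrw, Real.norm_natCast] at this
    exact this
  set D : ℝ := ∑ n ∈ Finset.Icc 1 N₀, ‖g n‖ with hD
  have hD0 : 0 ≤ D := Finset.sum_nonneg fun _ _ => norm_nonneg _
  refine ⟨max C 1 + D, by positivity, fun M => ?_⟩
  rcases le_or_gt N₀ M with hM | hM
  · calc (∑ n ∈ Finset.Icc 1 M, ‖g n‖) ≤ C * M := key M hM
      _ ≤ (max C 1 + D) * M := by
        apply mul_le_mul_of_nonneg_right _ (Nat.cast_nonneg M)
        calc C ≤ max C 1 := le_max_left _ _
          _ ≤ max C 1 + D := by linarith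
  · rcases Nat.eq_zero_or_pos M with rfl | hM1
    · simp
    · have hsub : (∑ n ∈ Finset.Icc 1 M, ‖g n‖) ≤ D := by
        apply Finset.sum_le_sum_of_subset_of_nonneg
        · exact Finset.Icc_subset_Icc_right (by omega)
        · exact fun _ _ _ => norm_nonneg _
      calc (∑ n ∈ Finset.Icc 1 M, ‖g n‖) ≤ D := hsub
        _ ≤ (max C 1 + D) * 1 := by rw [mul_one]; have : (1:ℝ) ≤ max C 1 := le_max_right _ _; linarith
        _ ≤ (max C 1 + D) * M := by
          apply mul_le_mul_of_nonneg_left _ (by positivity)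
          exact_mod_cast hM1

/-- The fractional-part bound: `|⌊N/d⌋ - N/d| ≤ 1`. -/
lemma axer_frac (N d : ℕ) (hd : 1 ≤ d) : ‖((N / d : ℕ) : ℂ) - (N : ℂ) / d‖ ≤ 1 := by
  have hd0 : (0 : ℝ) < d := by exact_mod_cast hd
  have h1 : ((N / d : ℕ) : ℝ) ≤ (N : ℝ) / d := Nat.cast_div_le
  have h2 : (N : ℝ) / d ≤ ((N / d : ℕ) : ℝ) + 1 := by
    rw [div_le_iff₀ hd0]
    have h3 : N < N / d * d + d := Nat.lt_div_mul_add (by omega)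
    have h4 : (N : ℝ) < ((N / d : ℕ) : ℝ) * d + d := by exact_mod_cast h3
    nlinarith
  have heq : ((N / d : ℕ) : ℂ) - (N : ℂ) / d = ((((N / d : ℕ) : ℝ) - (N : ℝ) / d : ℝ) : ℂ) := by
    push_cast; ring
  rw [heq, Complex.norm_real, Real.norm_eq_abs, abs_le]
  constructor <;> linarith

/-- Axer's theorem over the naturals. -/
lemma axer_nat (f g : ℕ → ℂ) (c : ℂ)
    (hf : ∀ n : ℕ, 1 ≤ n → f n = ∑ d ∈ n.divisors, g d)
    (hc : Tendsto (fun N : ℕ => ∑ n ∈ Finset.Icc 1 N, g n / n) atTop (nhds c))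
    (hg : (fun x : ℝ => ∑ n ∈ Finset.Icc 1 ⌊x⌋₊, ‖g n‖) =O[atTop] (fun x : ℝ => x)) :
    Tendsto (fun N : ℕ => (∑ n ∈ Finset.Icc 1 N, f n) / N) atTop (nhds c) := by
  obtain ⟨C, hC0, hC⟩ := axer_bound g hg
  have hS0 : Tendsto (fun N : ℕ => (∑ n ∈ Finset.Icc 1 N, g n) / N) atTop (nhds 0) :=
    axer_kronecker g c hc
  rw [Metric.tendsto_nhds]
  intro ε hε
  obtain ⟨K, hKgt⟩ := exists_nat_gt (4 * C / ε)
  rw [div_lt_iff₀ hε] at hKgt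
  have hK4 : C / (K + 1) < ε / 4 := by
    rw [div_lt_div_iff₀ (by positivity) (by norm_num)]
    nlinarith
  -- the decomposition
  have hdecomp : ∀ N : ℕ,
      (∑ n ∈ Finset.Icc 1 N, f n)
        = (∑ d ∈ Finset.Icc 1 (N / (K + 1)), ((N / d : ℕ) : ℂ) * g d)
          + ∑ k ∈ Finset.Icc 1 K, (k : ℂ)
              * ((∑ n ∈ Finset.Icc 1 (N / k), g n)
                  - ∑ n ∈ Finset.Icc 1 (N / (k + 1)), g n) := by
    intro N
    rw [axer_swap f g hf N]
    have hsplit : (∑ d ∈ Finset.Icc 1 N, ((N / d : ℕ) : ℂ) * g d)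
        = (∑ d ∈ Finset.Icc 1 (N / (K + 1)), ((N / d : ℕ) : ℂ) * g d)
          + ∑ d ∈ Finset.Ioc (N / (K + 1)) N, ((N / d : ℕ) : ℂ) * g d := by
      rw [(show Finset.Icc 1 _ = Finset.Ioc 0 _ from Finset.Icc_add_one_left_eq_Ioc 0 _), (show Finset.Icc 1 _ = Finset.Ioc 0 _ from Finset.Icc_add_one_left_eq_Ioc 0 _),
          Finset.sum_Ioc_consecutive _ (Nat.zero_le _) (Nat.div_le_self N (K + 1))]
    rw [hsplit, axer_telescope]
    congr 1
    refine Finset.sum_congr rfl fun k hk => ?_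
    rw [Finset.mem_Icc] at hk
    have hinner : ∀ d ∈ Finset.Ioc (N / (k + 1)) (N / k),
        ((N / d : ℕ) : ℂ) * g d = (k : ℂ) * g d := by
      intro d hd; rw [axer_div_eq N k d hk.1 hd]
    rw [Finset.sum_congr rfl hinner, ← Finset.mul_sum]
    congr 1
    have hcons := Finset.sum_Ioc_consecutive g (Nat.zero_le (N / (k + 1)))
      (Nat.div_le_div_left (by omega) (by omega) : N / (k + 1) ≤ N / k)
    rw [(show Finset.Icc 1 _ = Finset.Ioc 0 _ from Finset.Icc_add_one_left_eq_Ioc 0 _), (show Finset.Icc 1 _ = Finset.Ioc 0 _ from Finset.Icc_add_one_left_eq_Ioc 0 _), eq_sub_iff_add_eq, add_comm]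
    exact hcons
  -- head estimate
  have hhead : ∀ N : ℕ, ‖(∑ d ∈ Finset.Icc 1 (N / (K + 1)), ((N / d : ℕ) : ℂ) * g d)
      - (N : ℂ) * (∑ d ∈ Finset.Icc 1 (N / (K + 1)), g d / d)‖ ≤ C * N / (K + 1) := by
    intro N
    rw [Finset.mul_sum, ← Finset.sum_sub_distrib]
    calc ‖∑ d ∈ Finset.Icc 1 (N / (K + 1)),
            (((N / d : ℕ) : ℂ) * g d - (N : ℂ) * (g d / d))‖
        ≤ ∑ d ∈ Finset.Icc 1 (N / (K + 1)),
            ‖((N / d : ℕ) : ℂ) * g d - (N : ℂ) * (g d / d)‖ := norm_sum_le _ _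
      _ ≤ ∑ d ∈ Finset.Icc 1 (N / (K + 1)), ‖g d‖ := by
          refine Finset.sum_le_sum fun d hd => ?_
          rw [Finset.mem_Icc] at hd
          have hrw : ((N / d : ℕ) : ℂ) * g d - (N : ℂ) * (g d / d)
              = (((N / d : ℕ) : ℂ) - (N : ℂ) / d) * g d := by ring
          rw [hrw, norm_mul]
          calc ‖((N / d : ℕ) : ℂ) - (N : ℂ) / d‖ * ‖g d‖
              ≤ 1 * ‖g d‖ := by
                apply mul_le_mul_of_nonneg_right (axer_frac N d hd.1) (norm_nonneg _)
            _ = ‖g d‖ := one_mul _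
      _ ≤ C * (N / (K + 1) : ℕ) := hC _
      _ ≤ C * N / (K + 1) := by
          rw [mul_div_assoc]
          refine mul_le_mul_of_nonneg_left ?_ hC0.le
          exact_mod_cast (Nat.cast_div_le : ((N / (K + 1) : ℕ) : ℝ) ≤ (N : ℝ) / ((K + 1 : ℕ) : ℝ))
  -- tail tends to zero
  have htail : Tendsto (fun N : ℕ =>
      (∑ k ∈ Finset.Icc 1 K, (k : ℂ)
        * ((∑ n ∈ Finset.Icc 1 (N / k), g n)
            - ∑ n ∈ Finset.Icc 1 (N / (k + 1)), g n)) / N) atTop (nhds 0) := by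
    have hterm : ∀ k ∈ Finset.Icc 1 K, Tendsto (fun N : ℕ =>
        (k : ℂ) * ((∑ n ∈ Finset.Icc 1 (N / k), g n) / N
          - (∑ n ∈ Finset.Icc 1 (N / (k + 1)), g n) / N)) atTop (nhds ((k : ℂ) * (0 - 0))) := by
      intro k hk
      rw [Finset.mem_Icc] at hk
      exact (((axer_Sdiv _ hS0 k hk.1).sub (axer_Sdiv _ hS0 (k + 1) (by omega)))).const_mul _
    have hsum := tendsto_finset_sum (Finset.Icc 1 K) hterm
    simp only [sub_zero, mul_zero, Finset.sum_const_zero] at hsum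
    refine hsum.congr fun N => ?_
    rw [Finset.sum_div]
    exact Finset.sum_congr rfl fun k _ => by ring
  -- limit of G (N / (K+1))
  have hGc : Tendsto (fun N : ℕ => ∑ n ∈ Finset.Icc 1 (N / (K + 1)), g n / n)
      atTop (nhds c) := hc.comp (Nat.tendsto_div_const_atTop (by omega))
  rw [Metric.tendsto_nhds] at htail hGc
  filter_upwards [htail (ε / 4) (by positivity), hGc (ε / 4) (by positivity),
    Filter.eventually_ge_atTop 1] with N htailN hGN hN1
  rw [dist_eq_norm] at *
  have hN0 : (N : ℂ) ≠ 0 := Nat.cast_ne_zero.mpr (by omega)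
  have hN0' : (0 : ℝ) < (N : ℝ) := by exact_mod_cast hN1
  set M := N / (K + 1) with hM
  set hd := ∑ d ∈ Finset.Icc 1 M, ((N / d : ℕ) : ℂ) * g d with hhd
  set tl := ∑ k ∈ Finset.Icc 1 K, (k : ℂ)
      * ((∑ n ∈ Finset.Icc 1 (N / k), g n) - ∑ n ∈ Finset.Icc 1 (N / (k + 1)), g n) with htl
  set G : ℂ := ∑ n ∈ Finset.Icc 1 M, g n / n with hGdef
  have hsplit2 : (∑ n ∈ Finset.Icc 1 N, f n) / N - c
      = (hd - (N : ℂ) * G) / N + (G - c) + tl / N := by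
    rw [hdecomp N]
    field_simp
    ring
  rw [hsplit2]
  have hb1 : ‖(hd - (N : ℂ) * G) / N‖ ≤ C / (K + 1) := by
    rw [norm_div, Complex.norm_natCast]
    rw [div_le_iff₀ hN0']
    calc ‖hd - (N : ℂ) * G‖ ≤ C * N / (K + 1) := hhead N
      _ = C / (K + 1) * N := by ring
  calc ‖(hd - (N : ℂ) * G) / N + (G - c) + tl / N‖
      ≤ ‖(hd - (N : ℂ) * G) / N‖ + ‖G - c‖ + ‖tl / N‖ := norm_add₃_le
    _ < ε / 4 + ε / 4 + ε / 4 :=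
        add_lt_add (add_lt_add (lt_of_le_of_lt hb1 hK4) hGN) (by simpa using htailN)
    _ < ε := by linarith

/-- **Axer's theorem** (Theorem 8): if f(n) = ∑_{d ∣ n} g(d), the series
∑_{n ≥ 1} g(n)/n converges with sum c, and ∑_{n ≤ x} |g(n)| = O(x), then
∑_{n ≤ x} f(n) = c·x + o(x); in particular M(f) = c. -/
theorem axer (f g : ℕ → ℂ) (c : ℂ)
    (hf : ∀ n : ℕ, 1 ≤ n → f n = ∑ d ∈ n.divisors, g d)
    (hc : Tendsto (fun N : ℕ => ∑ n ∈ Finset.Icc 1 N, g n / n) atTop (nhds c))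
    (hg : (fun x : ℝ => ∑ n ∈ Finset.Icc 1 ⌊x⌋₊, ‖g n‖) =O[atTop] (fun x : ℝ => x)) :
    Tendsto (fun x : ℝ => (∑ n ∈ Finset.Icc 1 ⌊x⌋₊, f n) / x) atTop (nhds c) := by
  have hnat := axer_nat f g c hf hc hg
  have h1 : Tendsto (fun x : ℝ => (∑ n ∈ Finset.Icc 1 ⌊x⌋₊, f n) / (⌊x⌋₊ : ℂ))
      atTop (nhds c) := hnat.comp tendsto_nat_floor_atTop
  have h2 : Tendsto (fun x : ℝ => ((⌊x⌋₊ : ℂ) / (x : ℂ))) atTop (nhds 1) := by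
    have := (Complex.continuous_ofReal.tendsto 1).comp
      (tendsto_nat_floor_div_atTop (R := ℝ))
    simpa [Function.comp_def] using this
  have h3 := h1.mul h2
  rw [mul_one] at h3
  refine h3.congr' ?_
  filter_upwards [Filter.eventually_ge_atTop (1 : ℝ)] with x hx
  have hfl : 1 ≤ ⌊x⌋₊ := Nat.le_floor (by exact_mod_cast hx)
  have hx0 : x ≠ 0 := by linarith
  have hflC : ((⌊x⌋₊ : ℕ) : ℂ) ≠ 0 := Nat.cast_ne_zero.mpr (by omega)
  have hxC : (x : ℂ) ≠ 0 := Complex.ofReal_ne_zero.mpr hx0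
  push_cast
  field_simp
end

section
/- Let f, g : ℕ → ℂ be arithmetic functions with f(n) = ∑_{d | n} g(d) for every n ≥ 1, and suppose ∑_{n ≥ 1} |g(n)|/n converges. Then for integers a, q ≥ 1 with a < q and gcd(a, q) = 1, the mean value of f along the arithmetic progression n ≡ a (mod q) exists and equals lim_{x→∞} (1/x) ∑_{n ≤ x, n ≡ a (mod q)} f(n) = (1/q) ∑_{d | q} (μ(d)/d) ∑_{n ≥ 1} g(d·n)/n. -/
open Filter Finset ArithmeticFunction

lemma card_residue_Icc (m r N : ℕ) (hr : 0 < r) (hrm : r < m) (hrN : r ≤ N) :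
    ((Finset.Icc 1 N).filter (fun n => n % m = r)).card = (N - r) / m + 1 := by
  have hm : 0 < m := hr.trans hrm
  have hset : (Finset.Icc 1 N).filter (fun n => n % m = r) =
      (Finset.range ((N - r) / m + 1)).image (fun k => r + m * k) := by
    ext n
    simp only [Finset.mem_filter, Finset.mem_Icc, Finset.mem_image, Finset.mem_range,
      Nat.lt_succ_iff]
    constructor
    · rintro ⟨⟨h1, h2⟩, hmod⟩
      have hn : r + m * (n / m) = n := by
        conv_rhs => rw [← Nat.mod_add_div n m, hmod]
      refine ⟨n / m, ?_, hn⟩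
      rw [Nat.le_div_iff_mul_le hm, mul_comm]
      omega
    · rintro ⟨k, hk, rfl⟩
      rw [Nat.le_div_iff_mul_le hm, mul_comm] at hk
      refine ⟨⟨by omega, by omega⟩, ?_⟩
      rw [Nat.add_mul_mod_self_left, Nat.mod_eq_of_lt hrm]
  rw [hset, Finset.card_image_of_injective _ ?_, Finset.card_range]
  intro x y hxy
  simp only [add_right_inj] at hxy
  exact Nat.eq_of_mul_eq_mul_left hm hxy

lemma tendsto_card_residue (m r : ℕ) (hr : 0 < r) (hrm : r < m) :
    Tendsto (fun x : ℝ =>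
      (((Finset.Icc 1 ⌊x⌋₊).filter (fun n => n % m = r)).card : ℝ) / x)
      atTop (nhds (1 / m)) := by
  have hm : 0 < m := hr.trans hrm
  have hm' : (0 : ℝ) < m := by exact_mod_cast hm
  have hlo : Tendsto (fun x : ℝ => 1 / (m:ℝ) - ((1 + r) / m) * x⁻¹) atTop (nhds (1 / m)) := by
    have h2 := (tendsto_inv_atTop_zero (𝕜 := ℝ)).const_mul (((1:ℝ) + r) / m)
    simpa using (tendsto_const_nhds (α := ℝ) (x := 1 / (m:ℝ))).sub h2
  have hup : Tendsto (fun x : ℝ => 1 / (m:ℝ) - ((r:ℝ) / m) * x⁻¹ + x⁻¹) atTop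
      (nhds (1 / m)) := by
    have h0 := tendsto_inv_atTop_zero (𝕜 := ℝ)
    have h2 := h0.const_mul ((r:ℝ) / m)
    simpa using ((tendsto_const_nhds (α := ℝ) (x := 1 / (m:ℝ))).sub h2).add h0
  have hbounds : ∀ x : ℝ, (r:ℝ) + 1 ≤ x →
      (1 / (m:ℝ) - ((1 + r) / m) * x⁻¹ ≤
        (((Finset.Icc 1 ⌊x⌋₊).filter (fun n => n % m = r)).card : ℝ) / x ∧
      (((Finset.Icc 1 ⌊x⌋₊).filter (fun n => n % m = r)).card : ℝ) / x ≤
        1 / (m:ℝ) - ((r:ℝ) / m) * x⁻¹ + x⁻¹) := by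
    intro x hx
    have hr' : (0:ℝ) ≤ r := Nat.cast_nonneg r
    have hx1 : (1:ℝ) ≤ x := by linarith
    have hx0 : (0:ℝ) < x := lt_of_lt_of_le one_pos hx1
    have hrN : r ≤ ⌊x⌋₊ := Nat.le_floor (by linarith)
    rw [card_residue_Icc m r ⌊x⌋₊ hr hrm hrN]
    set N := ⌊x⌋₊ with hN
    have hNx : (N:ℝ) ≤ x := Nat.floor_le (by linarith)
    have hxN : x - 1 < (N:ℝ) := Nat.sub_one_lt_floor x
    have hcast : ((N - r : ℕ) : ℝ) = (N:ℝ) - r := by push_cast [hrN]; ring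
    have hdiv1 : ((N - r) / m) * m ≤ N - r := Nat.div_mul_le_self _ _
    have hdiv2 : N - r < m * ((N - r) / m + 1) := Nat.lt_mul_div_succ _ hm
    have hd1 : (((N - r) / m : ℕ) : ℝ) * m ≤ (N:ℝ) - r := by
      calc (((N - r) / m : ℕ) : ℝ) * m = (((N - r) / m * m : ℕ) : ℝ) := by push_cast; ring
        _ ≤ ((N - r : ℕ) : ℝ) := by exact_mod_cast hdiv1
        _ = (N:ℝ) - r := hcast
    set c : ℝ := (((N - r) / m : ℕ) : ℝ) + 1 with hc
    have hd2 : (N:ℝ) - r < (m:ℝ) * c := by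
      calc (N:ℝ) - r = ((N - r : ℕ) : ℝ) := hcast.symm
        _ < ((m * ((N - r) / m + 1) : ℕ) : ℝ) := by exact_mod_cast hdiv2
        _ = (m:ℝ) * c := by rw [hc]; push_cast; ring
    have hgoalcast : (((N - r) / m + 1 : ℕ) : ℝ) = c := by rw [hc]; push_cast; ring
    clear_value N c
    rw [hgoalcast]
    constructor
    · have heq : 1 / (m:ℝ) - ((1 + r) / m) * x⁻¹ = (x - (1 + r)) / (m * x) := by
        field_simp
      rw [heq, div_le_div_iff₀ (by positivity) hx0]
      nlinarith
    · have key : (m:ℝ) * c ≤ x - r + m := by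
        have : (m:ℝ) * c = (((N - r) / m : ℕ) : ℝ) * m + m := by rw [hc]; ring
        nlinarith [hd1, hNx, this]
      have heq : 1 / (m:ℝ) - ((r:ℝ) / m) * x⁻¹ + x⁻¹ = (x - r + m) / (m * x) := by
        field_simp
      rw [heq, div_le_div_iff₀ hx0 (by positivity)]
      nlinarith
  refine tendsto_of_tendsto_of_tendsto_of_le_of_le' hlo hup ?_ ?_
  · filter_upwards [eventually_ge_atTop ((r:ℝ) + 1)] with x hx using (hbounds x hx).1
  · filter_upwards [eventually_ge_atTop ((r:ℝ) + 1)] with x hx using (hbounds x hx).2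

lemma crt_residue (a q d : ℕ) (ha : 0 < a) (haq : a < q) (hd : 0 < d)
    (hdq : d.Coprime q) :
    ∃ r : ℕ, 0 < r ∧ r < d * q ∧ ∀ n : ℕ, (n % q = a ∧ d ∣ n ↔ n % (d * q) = r) := by
  have hq : 0 < q := ha.trans haq
  obtain ⟨c, hc1, hc2⟩ := Nat.chineseRemainder hdq 0 a
  refine ⟨c % (d * q), ?_, Nat.mod_lt _ (by positivity), ?_⟩
  · -- positivity: c % (d*q) ≡ a mod q and a ≠ 0
    have hmod : c % (d * q) ≡ a [MOD q] := by
      have h1 : c % (d * q) ≡ c [MOD d * q] := Nat.mod_modEq c (d * q)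
      exact (Nat.ModEq.of_mul_left d h1).trans hc2
    rcases Nat.eq_zero_or_pos (c % (d * q)) with h | h
    · exfalso
      rw [h] at hmod
      have : a % q = 0 := by simpa [Nat.ModEq] using hmod.symm
      rw [Nat.mod_eq_of_lt haq] at this
      omega
    · exact h
  · intro n
    have hrc : c % (d * q) ≡ c [MOD d * q] := Nat.mod_modEq c (d * q)
    have hr1 : c % (d * q) ≡ 0 [MOD d] := (Nat.ModEq.of_mul_right q hrc).trans hc1
    have hr2 : c % (d * q) ≡ a [MOD q] := (Nat.ModEq.of_mul_left d hrc).trans hc2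
    constructor
    · rintro ⟨h1, h2⟩
      have hn1 : n ≡ c % (d * q) [MOD d] :=
        ((Nat.modEq_zero_iff_dvd).mpr h2).trans hr1.symm
      have hn2 : n ≡ c % (d * q) [MOD q] := by
        have : n ≡ a [MOD q] := by
          rw [Nat.ModEq, Nat.mod_eq_of_lt haq, h1]
        exact this.trans hr2.symm
      have := (Nat.modEq_and_modEq_iff_modEq_mul hdq).mp ⟨hn1, hn2⟩
      rw [Nat.ModEq, Nat.mod_mod_of_dvd _ dvd_rfl] at this
      exact this
    · intro h
      have hn : n ≡ c % (d * q) [MOD d * q] := by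
        rw [Nat.ModEq, h, Nat.mod_mod_of_dvd _ dvd_rfl]
      obtain ⟨hn1, hn2⟩ := (Nat.modEq_and_modEq_iff_modEq_mul hdq).mpr hn
      constructor
      · have : n ≡ a [MOD q] := hn2.trans hr2
        rw [Nat.ModEq, Nat.mod_eq_of_lt haq] at this
        exact this
      · exact (Nat.modEq_zero_iff_dvd).mp (hn1.trans hr1)

lemma swap_sum (g : ℕ → ℂ) (q a N : ℕ) :
    ∑ n ∈ (Finset.Icc 1 N).filter (fun n => n % q = a), ∑ d ∈ n.divisors, g d =
    ∑ d ∈ Finset.Icc 1 N,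
      g d * (((Finset.Icc 1 N).filter (fun n => n % q = a ∧ d ∣ n)).card : ℂ) := by
  have step1 : ∀ n ∈ (Finset.Icc 1 N).filter (fun n => n % q = a),
      ∑ d ∈ n.divisors, g d = ∑ d ∈ Finset.Icc 1 N, if d ∣ n then g d else 0 := by
    intro n hn
    simp only [Finset.mem_filter, Finset.mem_Icc] at hn
    obtain ⟨⟨h1, h2⟩, _⟩ := hn
    rw [Finset.sum_ite, Finset.sum_const_zero, add_zero]
    congr 1
    ext d
    simp only [Finset.mem_filter, Finset.mem_Icc, Nat.mem_divisors]
    constructor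
    · rintro ⟨hd, hn0⟩
      have h3 : 1 ≤ d := Nat.pos_of_dvd_of_pos hd (by omega)
      have h4 : d ≤ n := Nat.le_of_dvd (by omega) hd
      exact ⟨⟨h3, by omega⟩, hd⟩
    · rintro ⟨⟨hd1, hd2⟩, hd⟩; exact ⟨hd, by omega⟩
  rw [Finset.sum_congr rfl step1, Finset.sum_comm]
  refine Finset.sum_congr rfl fun d _ => ?_
  rw [Finset.sum_ite, Finset.sum_const_zero, add_zero, Finset.sum_const, nsmul_eq_mul,
    mul_comm, Finset.filter_filter]

lemma moebius_sum_divisors (n : ℕ) :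
    ∑ d ∈ n.divisors, (ArithmeticFunction.moebius d : ℤ) = if n = 1 then 1 else 0 := by
  rw [← ArithmeticFunction.coe_zeta_mul_apply, ArithmeticFunction.coe_zeta_mul_moebius,
    ArithmeticFunction.one_apply]

lemma value_identity (g : ℕ → ℂ) (q : ℕ) (hq : 2 ≤ q)
    (hg : Summable (fun n : ℕ => ‖g n‖ / n)) :
    (1 / (q : ℂ)) * ∑ d ∈ q.divisors,
        ((ArithmeticFunction.moebius d : ℂ) / d) * ∑' n : ℕ, g (d * n) / n =
      ∑' d : ℕ, (if d.Coprime q then g d / ((d : ℂ) * q) else 0) := by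
  have hq0 : q ≠ 0 := by omega
  set h : ℕ → ℕ → ℂ := fun d m => if d ∣ m then g m / (m : ℂ) else 0 with hh
  have hnorm : ∀ m : ℕ, ‖g m / (m : ℂ)‖ = ‖g m‖ / m := by
    intro m
    rw [norm_div, Complex.norm_natCast]
  have hsummable : ∀ d : ℕ, Summable (h d) := by
    intro d
    refine hg.of_norm_bounded fun m => ?_
    simp only [hh]
    split_ifs
    · rw [hnorm]
    · simp only [norm_zero]
      positivity
  -- Step A
  have stepA : ∀ d ∈ q.divisors, ∑' n : ℕ, g (d * n) / n = (d : ℂ) * ∑' m, h d m := by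
    intro d hd
    have hd0 : d ≠ 0 := (Nat.pos_of_mem_divisors hd).ne'
    have hco : ∀ n : ℕ, g (d * n) / (n : ℂ) = (d : ℂ) * h d (d * n) := by
      intro n
      rcases Nat.eq_zero_or_pos n with rfl | hn
      · simp [hh]
      · have : d ∣ d * n := dvd_mul_right d n
        simp only [hh, if_pos this]
        have hdc : (d : ℂ) ≠ 0 := Nat.cast_ne_zero.mpr hd0
        have hnc : (n : ℂ) ≠ 0 := Nat.cast_ne_zero.mpr hn.ne'
        push_cast
        field_simp
    rw [tsum_congr hco, tsum_mul_left]
    congr 1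
    refine Function.Injective.tsum_eq (g := fun n => d * n) ?_ ?_
    · exact fun x y hxy => Nat.eq_of_mul_eq_mul_left (Nat.pos_of_ne_zero hd0) hxy
    · intro m hm
      simp only [hh, Function.mem_support] at hm
      by_contra hc
      have hnd : ¬ d ∣ m := by
        rintro ⟨k, rfl⟩
        exact hc ⟨k, rfl⟩
      exact hm (if_neg hnd)
  have hmain : ∑ d ∈ q.divisors,
        ((ArithmeticFunction.moebius d : ℂ) / d) * ∑' n : ℕ, g (d * n) / n =
      ∑ d ∈ q.divisors, ∑' m, (ArithmeticFunction.moebius d : ℂ) * h d m := by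
    refine Finset.sum_congr rfl fun d hd => ?_
    rw [stepA d hd]
    have hd0 : (d : ℂ) ≠ 0 := Nat.cast_ne_zero.mpr (Nat.pos_of_mem_divisors hd).ne'
    rw [← mul_assoc, div_mul_cancel₀ _ hd0, tsum_mul_left]
  rw [hmain]
  -- swap sum and tsum
  rw [← Summable.tsum_finsetSum (fun d _ => (hsummable d).mul_left _)]
  rw [← tsum_mul_left]
  refine tsum_congr fun m => ?_
  -- pointwise identity
  have : ∑ d ∈ q.divisors, (ArithmeticFunction.moebius d : ℂ) * h d m =
      (∑ d ∈ q.divisors.filter (· ∣ m), (ArithmeticFunction.moebius d : ℂ)) * (g m / m) := by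
    rw [Finset.sum_filter, Finset.sum_mul]
    refine Finset.sum_congr rfl fun d _ => ?_
    simp only [hh]
    split_ifs <;> simp
  rw [this]
  have hfil : q.divisors.filter (· ∣ m) = (Nat.gcd q m).divisors := by
    ext d
    simp only [Finset.mem_filter, Nat.mem_divisors, Nat.dvd_gcd_iff]
    constructor
    · rintro ⟨⟨h1, _⟩, h2⟩
      exact ⟨⟨h1, h2⟩, fun hc => hq0 (Nat.eq_zero_of_gcd_eq_zero_left hc)⟩
    · rintro ⟨⟨h1, h2⟩, _⟩
      exact ⟨⟨h1, hq0⟩, h2⟩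
  rw [hfil]
  have hsum : ∑ d ∈ (Nat.gcd q m).divisors, (ArithmeticFunction.moebius d : ℂ) =
      if Nat.gcd q m = 1 then 1 else 0 := by
    have hz := moebius_sum_divisors (Nat.gcd q m)
    calc ∑ d ∈ (Nat.gcd q m).divisors, (ArithmeticFunction.moebius d : ℂ)
        = ((∑ d ∈ (Nat.gcd q m).divisors, (ArithmeticFunction.moebius d : ℤ) : ℤ) : ℂ) := by
          push_cast; rfl
      _ = _ := by rw [hz]; split_ifs <;> simp
  rw [hsum]
  have hcoiff : Nat.gcd q m = 1 ↔ m.Coprime q := by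
    rw [Nat.Coprime, Nat.gcd_comm]
  split_ifs with h1 h2 h2
  · rw [one_mul]
    rcases Nat.eq_zero_or_pos m with rfl | hm
    · simp
    · ring
  · exact absurd (hcoiff.mp h1) h2
  · exact absurd (hcoiff.mpr h2) h1
  · simp

/-- Theorem 10 (specialized via (41) to gcd(a,q) = 1): if f(n) = ∑_{d ∣ n} g(d)
and ∑_{n ≥ 1} |g(n)|/n converges, then for 1 ≤ a < q with gcd(a,q) = 1 the mean
value of f along n ≡ a (mod q) is (1/q) ∑_{d ∣ q} (μ(d)/d) ∑_{n ≥ 1} g(dn)/n. -/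
theorem mean_value_arithmetic_progression (f g : ℕ → ℂ)
    (hf : ∀ n : ℕ, 1 ≤ n → f n = ∑ d ∈ n.divisors, g d)
    (hg : Summable (fun n : ℕ => ‖g n‖ / n))
    (a q : ℕ) (ha : 1 ≤ a) (haq : a < q) (hcop : Nat.Coprime a q) :
    Tendsto (fun x : ℝ =>
        (∑ n ∈ (Finset.Icc 1 ⌊x⌋₊).filter (fun n => n % q = a), f n) / x) atTop
      (nhds ((1 / (q : ℂ)) * ∑ d ∈ q.divisors,
        ((ArithmeticFunction.moebius d : ℂ) / d) * ∑' n : ℕ, g (d * n) / n)) := by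
  have hq2 : 2 ≤ q := by omega
  rw [value_identity g q hq2 hg]
  set A : ℝ → ℕ → ℕ := fun x d =>
    ((Finset.Icc 1 ⌊x⌋₊).filter (fun n => n % q = a ∧ d ∣ n)).card with hA
  set L : ℕ → ℂ := fun d => if d.Coprime q then g d / ((d : ℂ) * q) else 0 with hL
  -- A vanishes if d = 0 or d not coprime to q or d > ⌊x⌋₊
  have hA0 : ∀ x : ℝ, ∀ d : ℕ, (d = 0 ∨ ¬ d.Coprime q ∨ (⌊x⌋₊ : ℕ) < d) → A x d = 0 := by
    intro x d hd
    rw [hA]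
    simp only [Finset.card_eq_zero]
    rw [Finset.filter_eq_empty_iff]
    rintro n hn
    simp only [Finset.mem_Icc] at hn
    rintro ⟨h1, h2⟩
    rcases hd with rfl | hd | hd
    · rw [Nat.zero_dvd] at h2; omega
    · apply hd
      have he1 : d.gcd q ∣ a := by
        have hdn : d.gcd q ∣ n := (Nat.gcd_dvd_left d q).trans h2
        have hdq : d.gcd q ∣ q := Nat.gcd_dvd_right d q
        rw [← h1]
        exact (Nat.dvd_mod_iff hdq).mpr hdn
      have : d.gcd q ∣ Nat.gcd a q := Nat.dvd_gcd he1 (Nat.gcd_dvd_right d q)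
      exact Nat.eq_one_of_dvd_one (hcop ▸ this)
    · have := Nat.le_of_dvd (by omega) h2
      omega
  -- the dominated convergence step
  have T : Tendsto (fun x : ℝ => ∑' d : ℕ, g d * (A x d : ℂ) / ((max x 1 : ℝ) : ℂ))
      atTop (nhds (∑' d, L d)) := by
    refine tendsto_tsum_of_dominated_convergence (bound := fun d => ‖g d‖ / d) hg ?_ ?_
    · intro d
      by_cases hco : d.Coprime q
      · have hd : 0 < d := by
          rcases Nat.eq_zero_or_pos d with rfl | h
          · rw [Nat.coprime_zero_left] at hco; omega
          · exact h
        obtain ⟨r, hr0, hrm, hiff⟩ := crt_residue a q d ha haq hd hco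
        have hAeq : ∀ x : ℝ, A x d =
            ((Finset.Icc 1 ⌊x⌋₊).filter (fun n => n % (d * q) = r)).card := by
          intro x
          show ((Finset.Icc 1 ⌊x⌋₊).filter (fun n => n % q = a ∧ d ∣ n)).card = _
          exact congrArg Finset.card (Finset.filter_congr fun n _ => hiff n)
        have hreal : Tendsto (fun x : ℝ => ((A x d : ℝ)) / x) atTop
            (nhds (1 / ((d * q : ℕ) : ℝ))) := by
          simp only [hAeq]
          exact tendsto_card_residue (d * q) r hr0 hrm
        have hcplx : Tendsto (fun x : ℝ => (((A x d : ℝ) / x : ℝ) : ℂ)) atTop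
            (nhds ((1 / ((d * q : ℕ) : ℝ) : ℝ) : ℂ)) :=
          (Complex.continuous_ofReal.tendsto _).comp hreal
        have hfinal := hcplx.const_mul (g d)
        rw [show L d = g d * ((1 / ((d * q : ℕ) : ℝ) : ℝ) : ℂ) by
          rw [hL]; simp only [if_pos hco]; push_cast; ring]
        apply hfinal.congr'
        filter_upwards [eventually_ge_atTop (1 : ℝ)] with x hx
        rw [max_eq_left hx]
        push_cast
        ring
      · have : ∀ x : ℝ, g d * (A x d : ℂ) / ((max x 1 : ℝ) : ℂ) = 0 := by
          intro x
          rw [hA0 x d (Or.inr (Or.inl hco))]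
          simp
        rw [show L d = 0 by rw [hL]; simp [hco]]
        simp only [this]
        exact tendsto_const_nhds
    · filter_upwards [eventually_ge_atTop (1 : ℝ)] with x hx
      intro d
      have hx0 : (0 : ℝ) < x := lt_of_lt_of_le one_pos hx
      rw [max_eq_left hx]
      rcases Nat.eq_zero_or_pos d with rfl | hd
      · rw [hA0 x 0 (Or.inl rfl)]
        simp
      · -- card bound : A x d * d ≤ ⌊x⌋₊
        have hcard : A x d * d ≤ ⌊x⌋₊ := by
          have hsub : A x d ≤ ⌊x⌋₊ / d := by
            rw [hA]
            have : ((Finset.Icc 1 ⌊x⌋₊).filter (fun n => n % q = a ∧ d ∣ n)).card ≤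
                (Finset.Icc 1 (⌊x⌋₊ / d)).card := by
              apply Finset.card_le_card_of_injOn (fun n => n / d)
              · intro n hn
                simp only [Finset.mem_coe, Finset.mem_filter, Finset.mem_Icc] at hn ⊢
                obtain ⟨⟨h1, h2⟩, _, h3⟩ := hn
                exact ⟨(Nat.one_le_div_iff hd).mpr (Nat.le_of_dvd (by omega) h3),
                  Nat.div_le_div_right h2⟩
              · intro n hn m hm hnm
                simp only [Finset.mem_coe, Finset.mem_filter, Finset.mem_Icc] at hn hm
                obtain ⟨_, _, hdn⟩ := hn
                obtain ⟨_, _, hdm⟩ := hm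
                dsimp only at hnm
                rw [← Nat.div_mul_cancel hdn, ← Nat.div_mul_cancel hdm, hnm]
            simpa using this
          calc A x d * d ≤ (⌊x⌋₊ / d) * d := by exact Nat.mul_le_mul_right d hsub
            _ ≤ ⌊x⌋₊ := Nat.div_mul_le_self _ _
        have hAd : (A x d : ℝ) * d ≤ x := by
          calc (A x d : ℝ) * d = ((A x d * d : ℕ) : ℝ) := by push_cast; ring
            _ ≤ (⌊x⌋₊ : ℝ) := by exact_mod_cast hcard
            _ ≤ x := Nat.floor_le (by linarith)
        have hd0 : (0 : ℝ) < d := by exact_mod_cast hd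
        have hnorm : ‖g d * (A x d : ℂ) / ((x : ℝ) : ℂ)‖ = ‖g d‖ * (A x d : ℝ) / x := by
          rw [norm_div, norm_mul, Complex.norm_natCast, Complex.norm_real,
            Real.norm_of_nonneg (le_of_lt hx0)]
        rw [hnorm, div_le_div_iff₀ hx0 hd0]
        nlinarith [norm_nonneg (g d), Nat.cast_nonneg (α := ℝ) (A x d)]
  -- transfer T to the stated sum
  apply T.congr'
  filter_upwards [eventually_ge_atTop (1 : ℝ)] with x hx
  have hx0 : (0 : ℝ) < x := lt_of_lt_of_le one_pos hx
  rw [max_eq_left hx]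
  have htsum : ∑' d : ℕ, g d * (A x d : ℂ) / ((x : ℝ) : ℂ) =
      ∑ d ∈ Finset.Icc 1 ⌊x⌋₊, g d * (A x d : ℂ) / ((x : ℝ) : ℂ) := by
    apply tsum_eq_sum
    intro d hd
    simp only [Finset.mem_Icc, not_and_or, not_le] at hd
    have : A x d = 0 := by
      rcases hd with hd | hd
      · interval_cases d
        exact hA0 x 0 (Or.inl rfl)
      · exact hA0 x d (Or.inr (Or.inr hd))
    rw [this]
    simp
  rw [htsum, ← Finset.sum_div]
  congr 1
  rw [← swap_sum g q a ⌊x⌋₊]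
  refine (Finset.sum_congr rfl fun n hn => ?_).symm
  simp only [Finset.mem_filter, Finset.mem_Icc] at hn
  exact hf n hn.1.1
end
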